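/- Let n ≥ 1 and let μ_1, …, μ_n satisfy 1 = μ_1 ≤ μ_2 ≤ … ≤ μ_n, and define π_i := (1/μ_i) · ∏_{j=i+1}^{n} (1 − 1/μ_j) for 1 ≤ i ≤ n. Then for every real s > −1, Σ_{i=1}^{n} π_i · ∏_{j=i}^{n} μ_j/(μ_j + s) = 1/(1 + s). -/

import Mathlib

theorem stmt4 {n : ℕ} (hn : 0 < n) (μ : Fin n → ℝ) (hμ1 : μ ⟨0, hn⟩ = 1)
    (hmono : Monotone μ) (π : Fin n → ℝ)
    (hπ : ∀ i, π i = (1 / μ i) * ∏ j ∈ Finset.Ioi i, (1 - 1 / μ j))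
    (s : ℝ) (hs : -1 < s) :
    ∑ i, π i * ∏ j ∈ Finset.Ici i, μ j / (μ j + s) = 1 / (1 + s) := by
  obtain ⟨m, rfl⟩ := Nat.exists_eq_succ_of_ne_zero hn.ne'
  have hμge : ∀ j, 1 ≤ μ j := by
    intro j
    calc (1:ℝ) = μ ⟨0, hn⟩ := hμ1.symm
    _ ≤ μ j := hmono (Fin.zero_le j)
  have hμpos : ∀ j, (0:ℝ) < μ j := fun j => lt_of_lt_of_le one_pos (hμge j)
  have hμs : ∀ j, (0:ℝ) < μ j + s := fun j => by have := hμge j; linarith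
  have h1s : (0:ℝ) < 1 + s := by linarith
  have key : ∀ k : Fin (m+1),
      ∑ i ∈ Finset.Ici k, π i * ∏ j ∈ Finset.Ici i, μ j / (μ j + s)
        = (1 - ∏ j ∈ Finset.Ici k, (μ j - 1) / (μ j + s)) / (1 + s) := by
    intro k
    induction k using Fin.reverseInduction with
    | last =>
      have hIci : Finset.Ici (Fin.last m) = {Fin.last m} := by
        ext x; simp [Fin.last_le_iff, eq_comm]
      have hIoi : Finset.Ioi (Fin.last m) = ∅ := by
        ext x; simp [Fin.lt_def, Fin.last]; omega
      simp only [hIci, hIoi, hπ, Finset.sum_singleton, Finset.prod_singleton,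
        Finset.prod_empty]
      have h1 := (hμpos (Fin.last m)).ne'
      have h2 := (hμs (Fin.last m)).ne'
      field_simp
      ring
    | cast i ih =>
      have hIoi : Finset.Ioi i.castSucc = Finset.Ici i.succ := by
        ext x; simp [Fin.lt_def, Fin.le_def, Fin.coe_castSucc, Fin.val_succ]
      have hIci : Finset.Ici i.castSucc = insert i.castSucc (Finset.Ici i.succ) := by
        ext x
        simp [Fin.le_def, Fin.ext_iff, Fin.coe_castSucc, Fin.val_succ]
        omega
      have hnotmem : i.castSucc ∉ Finset.Ici i.succ := by
        simp [Fin.le_def, Fin.coe_castSucc, Fin.val_succ]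
      rw [hIci, Finset.sum_insert hnotmem, ih, hIci, Finset.prod_insert hnotmem,
        Finset.prod_insert hnotmem, hπ, hIoi]
      have hprod : (∏ j ∈ Finset.Ici i.succ, (1 - 1 / μ j)) *
          ∏ j ∈ Finset.Ici i.succ, (μ j / (μ j + s))
          = ∏ j ∈ Finset.Ici i.succ, (μ j - 1) / (μ j + s) := by
        rw [← Finset.prod_mul_distrib]
        apply Finset.prod_congr rfl
        intro j _
        have h1 := (hμpos j).ne'
        have h2 := (hμs j).ne'
        field_simp
      set P := ∏ j ∈ Finset.Ici i.succ, (μ j - 1) / (μ j + s) with hP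
      have hc1 := (hμpos i.castSucc).ne'
      have hc2 := (hμs i.castSucc).ne'
      have hterm : (1 / μ i.castSucc * ∏ j ∈ Finset.Ici i.succ, (1 - 1 / μ j)) *
          (μ i.castSucc / (μ i.castSucc + s) * ∏ j ∈ Finset.Ici i.succ, (μ j / (μ j + s)))
          = P / (μ i.castSucc + s) := by
        have hC : (∏ j ∈ Finset.Ici i.succ, (μ j + s)) ≠ 0 :=
          (Finset.prod_pos fun j _ => hμs j).ne'
        rw [← hprod]
        field_simp
      rw [hterm]
      field_simp
      ring
  have h0 : (⟨0, hn⟩ : Fin (m+1)) = 0 := rfl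
  have huniv : Finset.Ici (0 : Fin (m+1)) = Finset.univ := by
    ext x; simp [Fin.zero_le]
  have hz : (∏ j ∈ Finset.Ici (0 : Fin (m+1)), (μ j - 1) / (μ j + s)) = 0 := by
    apply Finset.prod_eq_zero (i := (0 : Fin (m+1))) (Finset.mem_Ici.mpr le_rfl)
    rw [← h0, hμ1]
    simp
  have hk := key 0
  rw [huniv] at hz hk
  rw [hz] at hk
  simpa using hk
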